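/- For every nonempty finite set S of integers, ∑_{f ∈ S} 2^{−w_S(f)} = 1, where w_S(f) = |{ν₂(f − g) : g ∈ S, g ≠ f}| is the number of distinct 2-adic valuations of differences of f with the other elements of S. -/

import Mathlib

open scoped BigOperators

namespace Stmt5Aux

/-- number of distinct 2-adic valuations of differences -/
def w (S : Finset ℤ) (f : ℤ) : ℕ :=
  ((S.erase f).image (fun g => padicValInt 2 (f - g))).card

lemma val_odd {x : ℤ} (h : ¬ (2:ℤ) ∣ x) : padicValInt 2 x = 0 :=
  padicValInt.eq_zero_of_not_dvd (by exact_mod_cast h)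

lemma val_two_mul {x : ℤ} (hx : x ≠ 0) :
    padicValInt 2 (2 * x) = padicValInt 2 x + 1 := by
  rw [mul_comm]
  exact_mod_cast padicValInt_mul_eq_succ (p := 2) x hx

lemma val_pos {x : ℤ} (hx : x ≠ 0) (h2 : (2:ℤ) ∣ x) : 1 ≤ padicValInt 2 x := by
  have := (padicValInt_dvd_iff (p := 2) 1 x).mp (by simpa using h2)
  tauto

section halve

variable {S : Finset ℤ} {a : ℤ}

lemma Tinj (hall : ∀ x ∈ S, (2:ℤ) ∣ (x - a)) :
    ∀ x ∈ S, ∀ y ∈ S, (x - a) / 2 = (y - a) / 2 → x = y := by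
  intro x hx y hy hxy
  have hx' : 2 * ((x - a) / 2) = x - a := Int.mul_ediv_cancel' (hall x hx)
  have hy' : 2 * ((y - a) / 2) = y - a := Int.mul_ediv_cancel' (hall y hy)
  omega

lemma w_halve (hall : ∀ x ∈ S, (2:ℤ) ∣ (x - a)) {f : ℤ} (hf : f ∈ S) :
    w (S.image (fun x => (x - a) / 2)) ((f - a) / 2) = w S f := by
  have key : ∀ g ∈ S, f - g = 2 * ((f - a) / 2 - (g - a) / 2) := by
    intro g hg
    have h1 : 2 * ((f - a) / 2) = f - a := Int.mul_ediv_cancel' (hall f hf)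
    have h2 : 2 * ((g - a) / 2) = g - a := Int.mul_ediv_cancel' (hall g hg)
    omega
  have hval : ∀ g ∈ S, g ≠ f →
      padicValInt 2 (f - g) = padicValInt 2 ((f - a) / 2 - (g - a) / 2) + 1 := by
    intro g hg hne
    have hfg : f - g ≠ 0 := sub_ne_zero.mpr (Ne.symm hne)
    have hT : (f - a) / 2 - (g - a) / 2 ≠ 0 := by
      intro h; rw [key g hg, h] at hfg; simp at hfg
    rw [key g hg, val_two_mul hT]
  have hge : ∀ g ∈ S, g ≠ f → 1 ≤ padicValInt 2 (f - g) := by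
    intro g hg hne
    rw [hval g hg hne]; omega
  unfold w
  have himg : ((S.image (fun x => (x - a) / 2)).erase ((f - a) / 2)).image
      (fun g' => padicValInt 2 ((f - a) / 2 - g'))
      = (S.erase f).image (fun g => padicValInt 2 (f - g) - 1) := by
    ext v
    simp only [Finset.mem_image, Finset.mem_erase]
    constructor
    · rintro ⟨g', ⟨hne', g, hg, rfl⟩, rfl⟩
      have hgf : g ≠ f := fun h => hne' (by rw [h])
      exact ⟨g, ⟨hgf, hg⟩, by have := hval g hg hgf; omega⟩
    · rintro ⟨g, ⟨hgf, hg⟩, rfl⟩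
      refine ⟨(g - a) / 2, ⟨fun h => hgf (Tinj hall g hg f hf h), g, hg, rfl⟩, ?_⟩
      have := hval g hg hgf; omega
  have hcomp : (S.erase f).image (fun g => padicValInt 2 (f - g) - 1)
      = ((S.erase f).image (fun g => padicValInt 2 (f - g))).image (fun v => v - 1) := by
    rw [Finset.image_image]; rfl
  rw [himg, hcomp]
  apply Finset.card_image_of_injOn
  intro u hu v hv huv
  simp only [Finset.mem_coe, Finset.mem_image, Finset.mem_erase] at hu hv
  obtain ⟨g, ⟨hgf, hg⟩, rfl⟩ := hu
  obtain ⟨g', ⟨hgf', hg'⟩, rfl⟩ := hv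
  have h1 := hge g hg hgf
  have h2 := hge g' hg' hgf'
  dsimp only at huv
  omega

end halve

lemma w_split {S : Finset ℤ} {f b : ℤ} (hf : f ∈ S) (hb : b ∈ S) (hbf : b % 2 ≠ f % 2) :
    w S f = w (S.filter (fun x => x % 2 = f % 2)) f + 1 := by
  unfold w
  have himg : (S.erase f).image (fun g => padicValInt 2 (f - g))
      = insert 0 (((S.filter (fun x => x % 2 = f % 2)).erase f).image
          (fun g => padicValInt 2 (f - g))) := by
    ext v
    simp only [Finset.mem_insert, Finset.mem_image, Finset.mem_erase, Finset.mem_filter]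
    constructor
    · rintro ⟨g, ⟨hgf, hg⟩, rfl⟩
      by_cases hpar : g % 2 = f % 2
      · exact Or.inr ⟨g, ⟨hgf, hg, hpar⟩, rfl⟩
      · exact Or.inl (val_odd (by omega))
    · rintro (rfl | ⟨g, ⟨hgf, hg, _⟩, rfl⟩)
      · refine ⟨b, ⟨fun h => hbf (by rw [h]), hb⟩, val_odd (by omega)⟩
      · exact ⟨g, ⟨hgf, hg⟩, rfl⟩
  rw [himg, Finset.card_insert_of_notMem]
  intro h0
  simp only [Finset.mem_image, Finset.mem_erase, Finset.mem_filter] at h0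
  obtain ⟨g, ⟨hgf, _, hpar⟩, hv⟩ := h0
  have : 1 ≤ padicValInt 2 (f - g) :=
    val_pos (sub_ne_zero.mpr (Ne.symm hgf)) (by omega)
  omega

lemma main : ∀ (n : ℕ) (S : Finset ℤ) (hS : S.Nonempty),
    S.card + (S.max' hS - S.min' hS).toNat ≤ n →
    ∑ f ∈ S, (2 : ℝ) ^ (-(w S f : ℤ)) = 1 := by
  intro n
  induction n with
  | zero =>
    intro S hS hn
    have := Finset.card_pos.mpr hS
    omega
  | succ n ih =>
    intro S hS hn
    by_cases hcard : S.card = 1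
    · obtain ⟨c, rfl⟩ := Finset.card_eq_one.mp hcard
      simp [w]
    have hcard2 : 2 ≤ S.card := by
      have := Finset.card_pos.mpr hS; omega
    set a := S.min' hS with ha
    by_cases hall : ∀ x ∈ S, (2:ℤ) ∣ (x - a)
    · -- all elements same parity: translate and halve
      set T : ℤ → ℤ := fun x => (x - a) / 2 with hT
      have hinj := Tinj hall
      have hne' : (S.image T).Nonempty := hS.image T
      have hmono : Monotone T := by
        intro x y h
        exact Int.ediv_le_ediv (by norm_num) (by omega)
      have hmax : (S.image T).max' hne' = T (S.max' hS) := Finset.max'_image hmono S hne'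
      have hmin : (S.image T).min' hne' = T (S.min' hS) := Finset.min'_image hmono S hne'
      have hcardim : (S.image T).card = S.card := Finset.card_image_of_injOn hinj
      have hmm : a < S.max' hS := Finset.min'_lt_max'_of_card S (by omega)
      have hdvd : (2:ℤ) ∣ (S.max' hS - a) := hall _ (S.max'_mem hS)
      have hmeas : (S.image T).card + ((S.image T).max' hne' - (S.image T).min' hne').toNat ≤ n := by
        rw [hmax, hmin, hcardim]
        simp only [hT]
        omega
      have := ih (S.image T) hne' hmeas
      rw [Finset.sum_image hinj] at this
      rw [← this]
      apply Finset.sum_congr rfl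
      intro f hf
      rw [w_halve hall hf]
    · -- both parities present
      push_neg at hall
      obtain ⟨b, hbS, hb⟩ := hall
      have hba : b % 2 ≠ a % 2 := by omega
      have haS : a ∈ S := S.min'_mem hS
      set S₀ := S.filter (fun x => x % 2 = a % 2) with hS₀def
      set S₁ := S.filter (fun x => ¬ x % 2 = a % 2) with hS₁def
      have hS₀ne : S₀.Nonempty := ⟨a, Finset.mem_filter.mpr ⟨haS, rfl⟩⟩
      have hS₁ne : S₁.Nonempty := ⟨b, Finset.mem_filter.mpr ⟨hbS, hba⟩⟩
      have hsub₀ : S₀ ⊆ S := Finset.filter_subset _ _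
      have hsub₁ : S₁ ⊆ S := Finset.filter_subset _ _
      have hc₀ : S₀.card < S.card :=
        Finset.card_lt_card ((Finset.ssubset_iff_of_subset hsub₀).mpr
          ⟨b, hbS, by simp [hS₀def, hba, hbS]⟩)
      have hc₁ : S₁.card < S.card :=
        Finset.card_lt_card ((Finset.ssubset_iff_of_subset hsub₁).mpr
          ⟨a, haS, by simp [hS₁def, haS]⟩)
      have hmeas₀ : S₀.card + (S₀.max' hS₀ne - S₀.min' hS₀ne).toNat ≤ n := by
        have h1 := Finset.max'_subset hS₀ne hsub₀
        have h2 := Finset.min'_subset hS₀ne hsub₀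
        omega
      have hmeas₁ : S₁.card + (S₁.max' hS₁ne - S₁.min' hS₁ne).toNat ≤ n := by
        have h1 := Finset.max'_subset hS₁ne hsub₁
        have h2 := Finset.min'_subset hS₁ne hsub₁
        omega
      have ih₀ := ih S₀ hS₀ne hmeas₀
      have ih₁ := ih S₁ hS₁ne hmeas₁
      have hstep : ∀ (k : ℕ), (2:ℝ) ^ (-((k + 1 : ℕ) : ℤ)) = (2:ℝ) ^ (-(k : ℤ)) * 2⁻¹ := by
        intro k
        rw [show -((k + 1 : ℕ) : ℤ) = -(k : ℤ) + (-1) by push_cast; ring,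
          zpow_add₀ (by norm_num : (2:ℝ) ≠ 0)]
        norm_num
      rw [← Finset.sum_filter_add_sum_filter_not S (fun x => x % 2 = a % 2)]
      have hsum₀ : ∑ f ∈ S₀, (2 : ℝ) ^ (-(w S f : ℤ))
          = ∑ f ∈ S₀, (2 : ℝ) ^ (-(w S₀ f : ℤ)) * 2⁻¹ := by
        apply Finset.sum_congr rfl
        intro f hf
        obtain ⟨hfS, hfp⟩ := Finset.mem_filter.mp hf
        have hw := w_split hfS hbS (by omega)
        have hfe : S.filter (fun x => x % 2 = f % 2) = S₀ := by
          rw [hS₀def]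
          apply Finset.filter_congr
          intro x _
          omega
        rw [hw, hfe, hstep]
      have hsum₁ : ∑ f ∈ S₁, (2 : ℝ) ^ (-(w S f : ℤ))
          = ∑ f ∈ S₁, (2 : ℝ) ^ (-(w S₁ f : ℤ)) * 2⁻¹ := by
        apply Finset.sum_congr rfl
        intro f hf
        obtain ⟨hfS, hfp⟩ := Finset.mem_filter.mp hf
        have hw := w_split hfS haS (by omega)
        have hfe : S.filter (fun x => x % 2 = f % 2) = S₁ := by
          rw [hS₁def]
          apply Finset.filter_congr
          intro x _
          omega
        rw [hw, hfe, hstep]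
      rw [show S.filter (fun x => x % 2 = a % 2) = S₀ from rfl,
        show S.filter (fun x => ¬ x % 2 = a % 2) = S₁ from rfl,
        hsum₀, hsum₁, ← Finset.sum_mul, ← Finset.sum_mul, ih₀, ih₁]
      norm_num

end Stmt5Aux

theorem stmt5 (S : Finset ℤ) (hS : S.Nonempty) :
    ∑ f ∈ S,
      (2 : ℝ) ^ (-((((S.erase f).image (fun g => padicValInt 2 (f - g))).card : ℤ))) = 1 := by
  have := Stmt5Aux.main (S.card + (S.max' hS - S.min' hS).toNat) S hS le_rfl
  simpa [Stmt5Aux.w] using this
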